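/- arXiv:2405.06369 — 3 statements merged into one kernel-verified Lean document; each statement's English description precedes it below -/
import Mathlib

section
/- Let A be a reduced Noetherian commutative ring with minimal prime ideals p₁,…,pₘ, and let A → R be a flat ring homomorphism such that R ⊗_A k(pᵢ) is reduced for every i (where k(pᵢ) is the residue field at pᵢ). Then R is reduced. -/
open TensorProduct

set_option maxHeartbeats 1000000 in
set_option synthInstance.maxHeartbeats 100000 in
/-- Let `A` be a reduced Noetherian commutative ring and `A → R` a flat
ring homomorphism (i.e. `R` is a flat `A`-algebra) such that for every minimal prime `p`
of `A` the fiber `R ⊗[A] k(p)` is reduced, where `k(p) = Frac(A ⧸ p)` is the residue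
field at `p`. Then `R` is reduced. -/
theorem reduced_of_flat_of_reduced_fibers_at_minimal_primes
    (A R : Type*) [CommRing A] [CommRing R] [IsNoetherianRing A] [IsReduced A]
    [Algebra A R] [Module.Flat A R]
    (hfib : ∀ (p : Ideal A) (hp : p ∈ minimalPrimes A),
      letI : p.IsPrime := hp.1.1
      IsReduced (TensorProduct A (FractionRing (A ⧸ p)) R)) :
    IsReduced R := by
  classical
  haveI : Fintype (minimalPrimes A) :=
    (minimalPrimes.finite_of_isNoetherianRing A).fintype
  set ι := (minimalPrimes A) with hι
  haveI : ∀ i : ι, (i : Ideal A).IsPrime := fun i => i.2.1.1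
  -- the residue fields
  let k : ι → Type _ := fun i => FractionRing (A ⧸ (i : Ideal A))
  -- the natural map A → ∏ k(pᵢ)
  let f : A →ₗ[A] (∀ i, k i) := LinearMap.pi fun i => Algebra.linearMap A (k i)
  have hf : Function.Injective f := by
    rw [injective_iff_map_eq_zero]
    intro a ha
    have hmem : ∀ i : ι, a ∈ (i : Ideal A) := by
      intro i
      have h0 : algebraMap A (k i) a = 0 := congrFun ha i
      rw [IsScalarTower.algebraMap_apply A (A ⧸ (i : Ideal A)) (k i)] at h0
      have h1 : algebraMap A (A ⧸ (i : Ideal A)) a = 0 :=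
        (IsFractionRing.injective (A ⧸ (i : Ideal A)) (k i)) (by simpa using h0)
      rw [Ideal.Quotient.algebraMap_eq] at h1
      rwa [← Ideal.Quotient.eq_zero_iff_mem]
    have : a ∈ sInf (minimalPrimes A) := by
      rw [Submodule.mem_sInf]
      intro p hp
      exact hmem ⟨p, hp⟩
    have hrad : sInf (minimalPrimes A) = nilradical A :=
      Ideal.sInf_minimalPrimes (I := (⊥ : Ideal A))
    rw [hrad, nilradical_eq_zero] at this
    simpa using this
  -- tensor with the flat module R
  have hg : Function.Injective (LinearMap.lTensor R f) :=
    Module.Flat.lTensor_preserves_injective_linearMap f hf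
  -- the composite map R → ∏ (R ⊗ k(pᵢ))
  let Φ : R →ₗ[A] ∀ i, R ⊗[A] k i :=
    (TensorProduct.piRightHom A A R k) ∘ₗ (LinearMap.lTensor R f) ∘ₗ
      (TensorProduct.rid A R).symm.toLinearMap
  have hΦinj : Function.Injective Φ := by
    have h1 : Function.Injective (TensorProduct.piRightHom A A R k) :=
      (TensorProduct.piRight A A R k).injective
    exact h1.comp (hg.comp (TensorProduct.rid A R).symm.injective)
  have hΦ : ∀ x : R, Φ x = fun i => x ⊗ₜ[A] (1 : k i) := by
    intro x
    show (TensorProduct.piRightHom A A R k) ((LinearMap.lTensor R f)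
      ((TensorProduct.rid A R).symm x)) = _
    rw [TensorProduct.rid_symm_apply]
    rw [LinearMap.lTensor_tmul]
    rw [TensorProduct.piRightHom_tmul]
    funext i
    simp [f, Algebra.linearMap_apply, map_one]
  -- conclude
  constructor
  intro x hx
  apply hΦinj
  rw [Φ.map_zero, hΦ]
  funext i
  haveI : IsReduced (TensorProduct A (k i) R) := hfib i i.2
  haveI : IsReduced (R ⊗[A] k i) :=
    isReduced_of_injective (Algebra.TensorProduct.comm A R (k i)).toRingHom
      (Algebra.TensorProduct.comm A R (k i)).injective
  have := hx.map (Algebra.TensorProduct.includeLeftRingHom :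
    R →+* R ⊗[A] k i)
  simpa using this
end

section
/- Let C be a complete Noetherian local ring with maximal ideal M, and let g ∈ C[[T]] be a formal power series whose reduction modulo M is a nonzero power series in (C/M)[[T]]. Then g is not a zero divisor in C[[T]]. -/
open IsLocalRing

/-- Let `C` be a complete Noetherian local ring with maximal ideal `M` and
let `g ∈ C⟦T⟧` be a formal power series whose reduction modulo `M` is a nonzero power
series in `(C/M)⟦T⟧`. Then `g` is not a zero divisor in `C⟦T⟧`. -/
theorem powerSeries_nonZeroDivisor_of_residue_ne_zero
    (C : Type*) [CommRing C] [IsLocalRing C] [IsNoetherianRing C]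
    [IsAdicComplete (maximalIdeal C) C]
    (g : PowerSeries C) (hg : PowerSeries.map (residue C) g ≠ 0) :
    g ∈ nonZeroDivisors (PowerSeries C) := by
  rw [mem_nonZeroDivisors_iff_right]
  intro f hf
  -- find minimal n with coeff g n ∉ M
  have hex : ∃ n, PowerSeries.coeff (R := C) n g ∉ maximalIdeal C := by
    by_contra h
    push_neg at h
    apply hg
    ext n
    simp [PowerSeries.coeff_map, Ideal.Quotient.eq_zero_iff_mem, h n]
  classical
  set n := Nat.find hex with hn
  have hgn : IsUnit (PowerSeries.coeff (R := C) n g) := by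
    have := Nat.find_spec hex
    rwa [IsLocalRing.notMem_maximalIdeal] at this
  have hmin : ∀ j < n, PowerSeries.coeff (R := C) j g ∈ maximalIdeal C := by
    intro j hj
    have := Nat.find_min hex hj
    simpa using this
  have key : ∀ k m, PowerSeries.coeff (R := C) m f ∈ (maximalIdeal C) ^ k := by
    intro k
    induction k with
    | zero => intro m; simp
    | succ k ih =>
      intro m
      induction m using Nat.strong_induction_on with
      | _ m ihm =>
        have h0 : (PowerSeries.coeff (R := C) (m + n)) (f * g) = 0 := by rw [hf]; simp
        rw [PowerSeries.coeff_mul] at h0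
        have hmem : ((m, n)) ∈ Finset.HasAntidiagonal.antidiagonal (m + n) := by simp
        rw [← Finset.add_sum_erase _ _ hmem] at h0
        have hsum : ∑ p ∈ (Finset.HasAntidiagonal.antidiagonal (m + n)).erase (m, n),
            PowerSeries.coeff (R := C) p.1 f * PowerSeries.coeff (R := C) p.2 g
            ∈ (maximalIdeal C) ^ (k + 1) := by
          apply Ideal.sum_mem
          intro p hp
          rw [Finset.mem_erase, Finset.HasAntidiagonal.mem_antidiagonal] at hp
          obtain ⟨hpne, hpsum⟩ := hp
          rcases lt_trichotomy p.1 m with h1 | h1 | h1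
          · exact Ideal.mul_mem_right _ _ (ihm p.1 h1)
          · exfalso; apply hpne
            have : p.2 = n := by omega
            exact Prod.ext h1 this
          · have h2 : p.2 < n := by omega
            rw [pow_succ]
            exact Ideal.mul_mem_mul (ih p.1) (hmin p.2 h2)
        have hfg : PowerSeries.coeff (R := C) m f * PowerSeries.coeff (R := C) n g
            ∈ (maximalIdeal C) ^ (k + 1) := by
          have : PowerSeries.coeff (R := C) m f * PowerSeries.coeff (R := C) n g = -∑ p ∈ (Finset.HasAntidiagonal.antidiagonal (m + n)).erase (m, n),
              PowerSeries.coeff (R := C) p.1 f * PowerSeries.coeff (R := C) p.2 g := by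
            exact eq_neg_of_add_eq_zero_left h0
          rw [this]
          exact neg_mem hsum
        obtain ⟨u, hu⟩ := hgn
        have : PowerSeries.coeff (R := C) m f =
            (PowerSeries.coeff (R := C) m f * PowerSeries.coeff (R := C) n g) * ↑u⁻¹ := by
          rw [mul_assoc, ← hu, Units.mul_inv, mul_one]
        rw [this]
        exact Ideal.mul_mem_right _ _ hfg
  ext m
  have haus : IsHausdorff (maximalIdeal C) C := inferInstance
  rw [map_zero]
  apply haus.haus'
  intro k
  rw [SModEq.zero]
  simpa using key k m
end

section
/- Let k be a field and f ∈ k[[T₁,…,Tₙ]] a nonzero formal power series. Then there exist positive integers u₁,…,u_{n-1} such that the k-algebra automorphism s of k[[T₁,…,Tₙ]] defined by s(Tᵢ) = Tᵢ + Tₙ^{uᵢ} for i < n and s(Tₙ) = Tₙ sends f to a power series g with g(0,…,0,Tₙ) ≠ 0. -/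
open Finsupp MvPowerSeries Finset

namespace Stmt9

variable {k : Type*} [CommRing k] {n : ℕ}

lemma degree_add (d e : Fin n →₀ ℕ) : (d + e).degree = d.degree + e.degree := by
  simp [Finsupp.degree_eq_weight_one, map_add]

lemma degree_eq_sum_univ (d : Fin n →₀ ℕ) : d.degree = ∑ i, d i := by
  rw [show d.degree = ∑ i ∈ d.support, d i from rfl]
  refine Finset.sum_subset (Finset.subset_univ _) ?_
  intro x _ hx
  exact Finsupp.notMem_support_iff.mp hx

/-- The bound finsupp: constant function with value `d.degree`. -/
noncomputable def bnd (d : Fin n →₀ ℕ) : Fin n →₀ ℕ :=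
  Finsupp.equivFunOnFinite.symm (fun _ => d.degree)

lemma mem_Iic_bnd {d e : Fin n →₀ ℕ} : e ∈ Finset.Iic (bnd d) ↔ ∀ i, e i ≤ d.degree := by
  simp [bnd, Finset.mem_Iic, Finsupp.le_def]

variable (a : Fin n → MvPowerSeries (Fin n) k)

/-- The monomial substitution product `∏ i, a i ^ e i`. -/
noncomputable def SP (e : Fin n →₀ ℕ) : MvPowerSeries (Fin n) k := ∏ i, a i ^ e i

lemma SP_add (e e' : Fin n →₀ ℕ) : SP a (e + e') = SP a e * SP a e' := by
  simp [SP, pow_add, Finset.prod_mul_distrib]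

lemma SP_zero : SP a 0 = 1 := by simp [SP]

lemma SP_single (i : Fin n) (m : ℕ) : SP a (Finsupp.single i m) = a i ^ m := by
  rw [SP, Finset.prod_eq_single i]
  · simp
  · intro j _ hj; simp [Finsupp.single_apply, Ne.symm hj]
  · simp

lemma coeff_SP_eq_zero (ha : ∀ i, constantCoeff (a i) = 0) :
    ∀ (N : ℕ) (e d : Fin n →₀ ℕ), e.degree ≤ N → d.degree < e.degree →
      coeff d (SP a e) = 0 := by
  intro N
  induction N with
  | zero => intro e d he hd; omega
  | succ N ih =>
    intro e d he hd
    have he0 : e ≠ 0 := by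
      intro h
      rw [h, map_zero] at hd; omega
    obtain ⟨i, hi⟩ : ∃ i, e i ≠ 0 := by
      by_contra h
      push_neg at h
      exact he0 (Finsupp.ext fun i => h i)
    have hee : e = Finsupp.single i 1 + (e - Finsupp.single i 1) := by
      ext j
      rcases eq_or_ne j i with rfl | hj
      · simp [Finsupp.single_apply]; omega
      · simp [Finsupp.single_apply, Ne.symm hj]
    have hdeg : e.degree = 1 + (e - Finsupp.single i 1).degree := by
      conv_lhs => rw [hee]
      rw [degree_add]
      congr 1
      simp [Finsupp.degree_single]
    rw [hee, SP_add, SP_single, pow_one, coeff_mul]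
    apply Finset.sum_eq_zero
    rintro ⟨d1, d2⟩ hmem
    rw [HasAntidiagonal.mem_antidiagonal] at hmem
    rcases eq_or_ne d1 0 with rfl | hd1
    · simp [ha i]
    · have hd1deg : d1.degree ≠ 0 := fun h => hd1 ((Finsupp.degree_eq_zero_iff d1).mp h)
      have hdd : d1.degree + d2.degree = d.degree := by rw [← degree_add, hmem]
      have : d2.degree < (e - Finsupp.single i 1).degree := by omega
      rw [ih _ _ (by omega) this, mul_zero]

lemma coeff_SP_eq_zero' (ha : ∀ i, constantCoeff (a i) = 0)
    {e d : Fin n →₀ ℕ} (h : d.degree < e.degree) : coeff d (SP a e) = 0 :=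
  coeff_SP_eq_zero a ha e.degree e d le_rfl h


section Sub

variable {k : Type*} [CommRing k] {n : ℕ}
variable (a : Fin n → MvPowerSeries (Fin n) k)

/-- The substitution of `a` into `f`. -/
noncomputable def sub (f : MvPowerSeries (Fin n) k) : MvPowerSeries (Fin n) k :=
  fun d => ∑ e ∈ Finset.Iic (bnd d), coeff e f * coeff d (SP a e)

variable (ha : ∀ i, constantCoeff (a i) = 0)

include ha in
lemma coeff_sub (f : MvPowerSeries (Fin n) k) (d : Fin n →₀ ℕ)
    {E : Finset (Fin n →₀ ℕ)} (hE : Finset.Iic (bnd d) ⊆ E) :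
    coeff d (sub a f) = ∑ e ∈ E, coeff e f * coeff d (SP a e) := by
  rw [show coeff d (sub a f) = ∑ e ∈ Finset.Iic (bnd d),
      coeff e f * coeff d (SP a e) from rfl]
  refine Finset.sum_subset hE ?_
  intro e _ he
  have : ∃ i, d.degree < e i := by
    by_contra h
    push_neg at h
    exact he (mem_Iic_bnd.mpr h)
  obtain ⟨i, hi⟩ := this
  have : d.degree < e.degree := lt_of_lt_of_le hi (Finsupp.le_degree i e)
  rw [coeff_SP_eq_zero' a ha this, mul_zero]

include ha in
lemma sub_map_add (f g : MvPowerSeries (Fin n) k) :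
    sub a (f + g) = sub a f + sub a g := by
  ext d
  rw [map_add, coeff_sub a ha _ d (le_refl _), coeff_sub a ha _ d (le_refl _),
    coeff_sub a ha _ d (le_refl _), ← Finset.sum_add_distrib]
  exact Finset.sum_congr rfl fun e _ => by rw [map_add, add_mul]

include ha in
lemma sub_map_smul (c : k) (f : MvPowerSeries (Fin n) k) :
    sub a (c • f) = c • sub a f := by
  ext d
  rw [MvPowerSeries.coeff_smul, coeff_sub a ha _ d (le_refl _),
    coeff_sub a ha _ d (le_refl _), Finset.mul_sum]
  exact Finset.sum_congr rfl fun e _ => by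
    rw [MvPowerSeries.coeff_smul, mul_assoc]

include ha in
lemma sub_map_one : sub a 1 = 1 := by
  ext d
  rw [coeff_sub a ha _ d (le_refl _)]
  rw [Finset.sum_eq_single_of_mem 0 (by simp [mem_Iic_bnd])]
  · simp [SP_zero]
  · intro e _ he
    classical
    rw [MvPowerSeries.coeff_one, if_neg he, zero_mul]

include ha in
lemma sub_map_mul (f g : MvPowerSeries (Fin n) k) :
    sub a (f * g) = sub a f * sub a g := by
  classical
  ext d
  set E := Finset.Iic (bnd d) with hEdef
  have hsub : ∀ d' : Fin n →₀ ℕ, d' ≤ d → Finset.Iic (bnd d') ⊆ E := by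
    intro d' hd'
    apply Finset.Iic_subset_Iic.mpr
    intro i
    simp only [bnd, Finsupp.coe_equivFunOnFinite_symm]
    obtain ⟨c, rfl⟩ := le_iff_exists_add.mp hd'
    rw [degree_add]; omega
  -- RHS
  have hRHS : coeff d (sub a f * sub a g) =
      ∑ p ∈ E ×ˢ E, coeff p.1 f * coeff p.2 g * coeff d (SP a (p.1 + p.2)) := by
    rw [coeff_mul]
    have : ∀ p ∈ antidiagonal d,
        coeff p.1 (sub a f) * coeff p.2 (sub a g) =
        ∑ q ∈ E ×ˢ E, coeff q.1 f * coeff q.2 g *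
          (coeff p.1 (SP a q.1) * coeff p.2 (SP a q.2)) := by
      rintro ⟨d1, d2⟩ hp
      rw [HasAntidiagonal.mem_antidiagonal] at hp
      rw [coeff_sub a ha f d1 (hsub d1 (hp ▸ le_add_right le_rfl)),
        coeff_sub a ha g d2 (hsub d2 (hp ▸ le_add_left le_rfl)),
        Finset.sum_mul_sum]
      rw [Finset.sum_product]
      exact Finset.sum_congr rfl fun e1 _ => Finset.sum_congr rfl fun e2 _ => by ring
    rw [Finset.sum_congr rfl this, Finset.sum_comm]
    refine Finset.sum_congr rfl fun q hq => ?_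
    rw [SP_add, coeff_mul, Finset.mul_sum]
  -- LHS
  have hLHS : coeff d (sub a (f * g)) =
      ∑ p ∈ (E ×ˢ E).filter (fun p => p.1 + p.2 ∈ E),
        coeff p.1 f * coeff p.2 g * coeff d (SP a (p.1 + p.2)) := by
    rw [coeff_sub a ha _ d (le_refl _)]
    have : ∀ e ∈ E, coeff e (f * g) * coeff d (SP a e) =
        ∑ p ∈ antidiagonal e, coeff p.1 f * coeff p.2 g * coeff d (SP a (p.1 + p.2)) := by
      intro e _
      rw [coeff_mul, Finset.sum_mul]
      refine Finset.sum_congr rfl fun p hp => ?_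
      rw [HasAntidiagonal.mem_antidiagonal] at hp
      rw [hp]
    rw [Finset.sum_congr rfl this, Finset.sum_sigma']
    refine Finset.sum_nbij' (fun x => x.2) (fun p => ⟨p.1 + p.2, p⟩) ?_ ?_ ?_ ?_ ?_
    · rintro ⟨e, p⟩ hx
      simp only [Finset.mem_sigma, HasAntidiagonal.mem_antidiagonal] at hx
      obtain ⟨he, hpe⟩ := hx
      simp only [Finset.mem_filter, Finset.mem_product]
      have h1 : p.1 ≤ e := hpe ▸ le_add_right le_rfl
      have h2 : p.2 ≤ e := hpe ▸ le_add_left le_rfl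
      rw [hEdef] at he ⊢
      rw [Finset.mem_Iic] at he
      exact ⟨⟨Finset.mem_Iic.mpr (le_trans h1 he), Finset.mem_Iic.mpr (le_trans h2 he)⟩,
        Finset.mem_Iic.mpr (hpe ▸ he)⟩
    · rintro p hp
      simp only [Finset.mem_filter] at hp
      simp only [Finset.mem_sigma, HasAntidiagonal.mem_antidiagonal]
      exact ⟨hp.2, trivial⟩
    · rintro ⟨e, p⟩ hx
      simp only [Finset.mem_sigma, HasAntidiagonal.mem_antidiagonal] at hx
      simp [hx.2]
    · rintro p _; rfl
    · rintro ⟨e, p⟩ _; rfl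
  rw [hLHS, hRHS]
  symm
  refine (Finset.sum_subset (Finset.filter_subset _ _) ?_).symm
  intro p hp hp2
  simp only [Finset.mem_filter, hp, true_and] at hp2
  have : ∃ i, d.degree < (p.1 + p.2) i := by
    by_contra h
    push_neg at h
    exact hp2 (mem_Iic_bnd.mpr h)
  obtain ⟨i, hi⟩ := this
  rw [coeff_SP_eq_zero' a ha (lt_of_lt_of_le hi (Finsupp.le_degree i _)), mul_zero]

end Sub

section Hom

variable {k : Type*} [CommRing k] {n : ℕ}
variable (a : Fin n → MvPowerSeries (Fin n) k)
variable (ha : ∀ i, constantCoeff (a i) = 0)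

include ha in
lemma sub_map_C (c : k) : sub a (MvPowerSeries.C c) = MvPowerSeries.C c := by
  have h1 : (MvPowerSeries.C c) = c • (1 : MvPowerSeries (Fin n) k) := by
    ext d
    classical
    rw [MvPowerSeries.coeff_smul, MvPowerSeries.coeff_C, MvPowerSeries.coeff_one]
    split <;> simp
  rw [h1, sub_map_smul a ha, sub_map_one a ha, ← h1]

/-- Substitution as an algebra homomorphism. -/
noncomputable def subHom : MvPowerSeries (Fin n) k →ₐ[k] MvPowerSeries (Fin n) k where
  toFun := sub a
  map_one' := sub_map_one a ha
  map_mul' := sub_map_mul a ha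
  map_zero' := by
    have := sub_map_smul a ha 0 0
    simpa using this
  map_add' := sub_map_add a ha
  commutes' := fun c => by
    rw [← MvPowerSeries.c_eq_algebraMap]
    exact sub_map_C a ha c

@[simp] lemma subHom_apply (f : MvPowerSeries (Fin n) k) : subHom a ha f = sub a f := rfl

include ha in
lemma sub_X (i : Fin n) : sub a (X i) = a i := by
  classical
  ext d
  rw [coeff_sub a ha _ d (le_refl _)]
  by_cases hmem : Finsupp.single i 1 ∈ Finset.Iic (bnd d)
  · rw [Finset.sum_eq_single_of_mem _ hmem]
    · rw [SP_single, pow_one, MvPowerSeries.coeff_X, if_pos rfl, one_mul]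
    · intro e _ he
      rw [MvPowerSeries.coeff_X, if_neg he, zero_mul]
  · have hd0 : d.degree = 0 := by
      by_contra h
      apply hmem
      rw [mem_Iic_bnd]
      intro j
      rw [Finsupp.single_apply]
      split <;> omega
    have hd : d = 0 := (Finsupp.degree_eq_zero_iff d).mp hd0
    rw [Finset.sum_eq_zero, hd]
    · rw [show coeff 0 (a i) = constantCoeff (a i) from rfl, ha i]
    · intro e he
      rw [MvPowerSeries.coeff_X]
      split
      · next h => exact absurd (h ▸ he) hmem
      · rw [zero_mul]

lemma prod_X_pow (e : Fin n →₀ ℕ) :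
    SP (fun i => (X i : MvPowerSeries (Fin n) k)) e = MvPowerSeries.monomial e 1 := by
  induction e using Finsupp.induction with
  | zero => rw [SP_zero]; exact (MvPowerSeries.monomial_zero_one (σ := Fin n) (R := k)).symm
  | single_add i m e hie hm ih =>
    rw [SP_add, SP_single, ih, MvPowerSeries.X_pow_eq,
      MvPowerSeries.monomial_mul_monomial, one_mul]

variable (b : Fin n → MvPowerSeries (Fin n) k)
variable (hb : ∀ i, constantCoeff (b i) = 0)

include ha hb in
lemma sub_comp (hba : ∀ i, sub b (a i) = X i) (f : MvPowerSeries (Fin n) k) :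
    sub b (sub a f) = f := by
  classical
  ext d
  set E := Finset.Iic (bnd d) with hEdef
  set M : Fin n →₀ ℕ := Finsupp.equivFunOnFinite.symm (fun _ => n * d.degree) with hMdef
  have hEM : ∀ e ∈ E, Finset.Iic (bnd e) ⊆ Finset.Iic M := by
    intro e he
    apply Finset.Iic_subset_Iic.mpr
    intro i
    simp only [bnd, hMdef, Finsupp.coe_equivFunOnFinite_symm]
    have h1 : ∀ j, e j ≤ d.degree := mem_Iic_bnd.mp he
    have : e.degree ≤ n * d.degree := by
      rw [degree_eq_sum_univ]
      calc ∑ j, e j ≤ ∑ _j : Fin n, d.degree := Finset.sum_le_sum fun j _ => h1 j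
      _ = n * d.degree := by rw [Finset.sum_const, Finset.card_univ, Fintype.card_fin,
        smul_eq_mul]
    exact this
  have step1 : coeff d (sub b (sub a f)) =
      ∑ e ∈ E, (∑ e' ∈ Finset.Iic M, coeff e' f * coeff e (SP a e')) *
        coeff d (SP b e) := by
    rw [coeff_sub b hb _ d (le_refl _)]
    exact Finset.sum_congr rfl fun e he => by rw [coeff_sub a ha f e (hEM e he)]
  rw [step1]
  have step2 : ∀ e' : Fin n →₀ ℕ,
      ∑ e ∈ E, coeff e (SP a e') * coeff d (SP b e) = coeff d (sub b (SP a e')) := by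
    intro e'
    rw [coeff_sub b hb _ d (le_refl _)]
  have step3 : ∀ e' : Fin n →₀ ℕ, sub b (SP a e') = MvPowerSeries.monomial e' 1 := by
    intro e'
    have : sub b (SP a e') = SP (fun i => (X i : MvPowerSeries (Fin n) k)) e' := by
      rw [SP, SP, show sub b = ⇑(subHom b hb) from rfl, map_prod]
      exact Finset.prod_congr rfl fun i _ => by
        rw [map_pow, subHom_apply, hba i]
    rw [this, prod_X_pow]
  calc ∑ e ∈ E, (∑ e' ∈ Finset.Iic M, coeff e' f * coeff e (SP a e')) *
        coeff d (SP b e)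
      = ∑ e ∈ E, ∑ e' ∈ Finset.Iic M,
          coeff e' f * coeff e (SP a e') * coeff d (SP b e) :=
        Finset.sum_congr rfl fun e _ => Finset.sum_mul _ _ _
    _ = ∑ e' ∈ Finset.Iic M, ∑ e ∈ E,
          coeff e' f * coeff e (SP a e') * coeff d (SP b e) := Finset.sum_comm
    _ = ∑ e' ∈ Finset.Iic M, coeff e' f *
          (∑ e ∈ E, coeff e (SP a e') * coeff d (SP b e)) := by
        refine Finset.sum_congr rfl fun e' _ => ?_
        rw [Finset.mul_sum]
        exact Finset.sum_congr rfl fun e _ => by ring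
    _ = ∑ e' ∈ Finset.Iic M, coeff e' f * coeff d (MvPowerSeries.monomial e' 1) := by
        refine Finset.sum_congr rfl fun e' _ => ?_
        rw [step2, step3]
    _ = coeff d f := by
        rw [Finset.sum_eq_single_of_mem d]
        · rw [MvPowerSeries.coeff_monomial_same, mul_one]
        · rw [Finset.mem_Iic]
          intro i
          simp only [hMdef, Finsupp.coe_equivFunOnFinite_symm]
          have h1 : d i ≤ d.degree := Finsupp.le_degree i d
          have h2 : 1 ≤ n := Nat.one_le_iff_ne_zero.mpr (by
            rintro rfl
            exact absurd i.2 (by omega))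
          calc d i ≤ d.degree := h1
            _ ≤ n * d.degree := Nat.le_mul_of_pos_left _ h2
        · intro e' _ he'
          rw [MvPowerSeries.coeff_monomial_ne (Ne.symm he'), mul_zero]

/-- Substitution as an algebra equivalence, when an inverse family is given. -/
noncomputable def subEquiv (hba : ∀ i, sub b (a i) = X i) (hab : ∀ i, sub a (b i) = X i) :
    MvPowerSeries (Fin n) k ≃ₐ[k] MvPowerSeries (Fin n) k :=
  AlgEquiv.ofAlgHom (subHom a ha) (subHom b hb)
    (AlgHom.ext fun f => sub_comp b hb a ha hab f)
    (AlgHom.ext fun f => sub_comp a ha b hb hba f)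

@[simp] lemma subEquiv_apply (hba : ∀ i, sub b (a i) = X i) (hab : ∀ i, sub a (b i) = X i)
    (f : MvPowerSeries (Fin n) k) : subEquiv a ha b hb hba hab f = sub a f := rfl

end Hom

section Apply

variable {k : Type*} [CommRing k] {n : ℕ}

lemma degree_single (i : Fin n) (m : ℕ) : (Finsupp.single i m : Fin n →₀ ℕ).degree = m := by
  classical
  rw [degree_eq_sum_univ, Finset.sum_eq_single i]
  · simp
  · intro j _ hj; simp [Finsupp.single_apply, Ne.symm hj]
  · simp

/-- The projection family: `X ℓ` at `ℓ`, `0` elsewhere. -/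
noncomputable def Pfam (ℓ : Fin n) : Fin n → MvPowerSeries (Fin n) k :=
  fun i => if i = ℓ then X ℓ else 0

lemma hPfam (ℓ : Fin n) : ∀ i, constantCoeff (Pfam (k := k) ℓ i) = 0 := by
  intro i
  unfold Pfam
  split
  · exact constantCoeff_X ℓ
  · exact map_zero _

lemma coeff_single_sub_P (ℓ : Fin n) (g : MvPowerSeries (Fin n) k) (m' : ℕ) :
    coeff (Finsupp.single ℓ m') (sub (Pfam ℓ) g) = coeff (Finsupp.single ℓ m') g := by
  classical
  rw [coeff_sub (Pfam ℓ) (hPfam ℓ) g _ (le_refl _)]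
  rw [Finset.sum_eq_single_of_mem (Finsupp.single ℓ m')]
  · rw [SP_single, show Pfam (k := k) ℓ ℓ = X ℓ from if_pos rfl, MvPowerSeries.X_pow_eq,
      MvPowerSeries.coeff_monomial_same, mul_one]
  · rw [mem_Iic_bnd, degree_single]
    intro i
    rw [Finsupp.single_apply]
    split <;> omega
  · intro e _ he
    by_cases hsupp : ∀ j, j ≠ ℓ → e j = 0
    · have heq : e = Finsupp.single ℓ (e ℓ) := by
        ext j
        rcases eq_or_ne j ℓ with rfl | hj
        · simp
        · rw [hsupp j hj, Finsupp.single_apply, if_neg (Ne.symm hj)]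
      have hne : e ℓ ≠ m' := by
        intro h
        exact he (by rw [heq, h])
      rw [heq, SP_single, show Pfam (k := k) ℓ ℓ = X ℓ from if_pos rfl,
        MvPowerSeries.X_pow_eq, MvPowerSeries.coeff_monomial_ne, mul_zero]
      intro hcon
      exact hne (by
        have := congrFun (congrArg (fun h : Fin n →₀ ℕ => (h : Fin n → ℕ)) hcon) ℓ
        simpa using this.symm)
    · push_neg at hsupp
      obtain ⟨j, hj, hej⟩ := hsupp
      have : SP (Pfam (k := k) ℓ) e = 0 := by
        rw [SP]
        apply Finset.prod_eq_zero (Finset.mem_univ j)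
        rw [show Pfam (k := k) ℓ j = 0 from if_neg hj, zero_pow hej]
      rw [this, map_zero, mul_zero]

/-- The shear family. -/
noncomputable def Afam (ℓ : Fin n) (u : Fin n → ℕ) : Fin n → MvPowerSeries (Fin n) k :=
  fun i => if i = ℓ then X ℓ else X i + X ℓ ^ u i

/-- The inverse shear family. -/
noncomputable def Bfam (ℓ : Fin n) (u : Fin n → ℕ) : Fin n → MvPowerSeries (Fin n) k :=
  fun i => if i = ℓ then X ℓ else X i - X ℓ ^ u i

lemma hAfam (ℓ : Fin n) (u : Fin n → ℕ) (hu : ∀ i, 0 < u i) :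
    ∀ i, constantCoeff (Afam (k := k) ℓ u i) = 0 := by
  intro i
  unfold Afam
  split
  · exact constantCoeff_X ℓ
  · rw [map_add, map_pow, constantCoeff_X, constantCoeff_X,
      zero_pow (Nat.pos_iff_ne_zero.mp (hu i)), add_zero]

lemma hBfam (ℓ : Fin n) (u : Fin n → ℕ) (hu : ∀ i, 0 < u i) :
    ∀ i, constantCoeff (Bfam (k := k) ℓ u i) = 0 := by
  intro i
  unfold Bfam
  split
  · exact constantCoeff_X ℓ
  · rw [map_sub, map_pow, constantCoeff_X, constantCoeff_X,
      zero_pow (Nat.pos_iff_ne_zero.mp (hu i)), sub_zero]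

lemma sub_B_A (ℓ : Fin n) (u : Fin n → ℕ) (hu : ∀ i, 0 < u i) :
    ∀ i, sub (Bfam ℓ u) (Afam (k := k) ℓ u i) = X i := by
  intro i
  unfold Afam
  split
  · next h =>
    subst h
    rw [sub_X _ (hBfam i u hu), Bfam, if_pos rfl]
  · next h =>
    rw [show sub (Bfam ℓ u) (X i + X ℓ ^ u i) =
        subHom (Bfam ℓ u) (hBfam ℓ u hu) (X i + X ℓ ^ u i) from rfl,
      map_add, map_pow, subHom_apply, subHom_apply, sub_X _ (hBfam ℓ u hu),
      sub_X _ (hBfam ℓ u hu)]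
    simp only [Bfam, if_neg h, eq_self_iff_true, if_true]
    ring

lemma sub_A_B (ℓ : Fin n) (u : Fin n → ℕ) (hu : ∀ i, 0 < u i) :
    ∀ i, sub (Afam ℓ u) (Bfam (k := k) ℓ u i) = X i := by
  intro i
  unfold Bfam
  split
  · next h =>
    subst h
    rw [sub_X _ (hAfam i u hu), Afam, if_pos rfl]
  · next h =>
    rw [show sub (Afam ℓ u) (X i - X ℓ ^ u i) =
        subHom (Afam ℓ u) (hAfam ℓ u hu) (X i - X ℓ ^ u i) from rfl,
      map_sub, map_pow, subHom_apply, subHom_apply, sub_X _ (hAfam ℓ u hu),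
      sub_X _ (hAfam ℓ u hu)]
    simp only [Afam, if_neg h, eq_self_iff_true, if_true]
    ring

lemma sub_P_A (ℓ : Fin n) (u : Fin n → ℕ) (hu : ∀ i, 0 < u i) (huℓ : u ℓ = 1) :
    ∀ i, sub (Pfam ℓ) (Afam (k := k) ℓ u i) = X ℓ ^ u i := by
  intro i
  unfold Afam
  split
  · next h => subst h; rw [sub_X _ (hPfam i), Pfam, if_pos rfl, huℓ, pow_one]
  · next h =>
    rw [show sub (Pfam ℓ) (X i + X ℓ ^ u i) =
        subHom (Pfam ℓ) (hPfam ℓ) (X i + X ℓ ^ u i) from rfl,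
      map_add, map_pow, subHom_apply, subHom_apply, sub_X _ (hPfam ℓ),
      sub_X _ (hPfam ℓ)]
    simp only [Pfam, if_neg h, eq_self_iff_true, if_true, zero_add]

lemma claimA (ℓ : Fin n) (u : Fin n → ℕ) (hu : ∀ i, 0 < u i) (huℓ : u ℓ = 1)
    (e : Fin n →₀ ℕ) (m' : ℕ) :
    coeff (Finsupp.single ℓ m') (SP (Afam (k := k) ℓ u) e) =
      if (∑ i, u i * e i) = m' then 1 else 0 := by
  classical
  rw [← coeff_single_sub_P ℓ _ m']
  have h1 : sub (Pfam ℓ) (SP (Afam (k := k) ℓ u) e) = X ℓ ^ (∑ i, u i * e i) := by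
    rw [SP, show sub (Pfam ℓ) = ⇑(subHom (Pfam ℓ) (hPfam (k := k) ℓ)) from rfl, map_prod]
    have : ∀ i ∈ Finset.univ, subHom (Pfam ℓ) (hPfam (k := k) ℓ) (Afam ℓ u i ^ e i) =
        (X ℓ : MvPowerSeries (Fin n) k) ^ (u i * e i) := by
      intro i _
      rw [map_pow, subHom_apply, sub_P_A ℓ u hu huℓ i, ← pow_mul]
    rw [Finset.prod_congr rfl this, Finset.prod_pow_eq_pow_sum]
  rw [h1, MvPowerSeries.X_pow_eq, MvPowerSeries.coeff_monomial]
  by_cases h : (∑ i, u i * e i) = m'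
  · rw [if_pos (by rw [h]), if_pos h]
  · rw [if_neg, if_neg h]
    intro hcon
    exact h (by
      have := congrFun (congrArg (fun h : Fin n →₀ ℕ => (h : Fin n → ℕ)) hcon) ℓ
      simpa using this.symm)

lemma key_ineq {n : ℕ} (e₀ e : Fin n →₀ ℕ)
    (h : toLex e₀ < toLex e) :
    (∑ i, (e₀.degree + 1) ^ (n - 1 - i.val) * e₀ i) <
      ∑ i, (e₀.degree + 1) ^ (n - 1 - i.val) * e i := by
  classical
  obtain ⟨j, heq, hlt⟩ := Finsupp.Lex.lt_iff.mp h
  simp only [ofLex_toLex] at heq hlt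
  set D := e₀.degree with hD
  set u : Fin n → ℕ := fun i => (D + 1) ^ (n - 1 - i.val) with hu
  rw [← Finset.sum_filter_add_sum_filter_not Finset.univ (· < j) (fun i => u i * e₀ i),
    ← Finset.sum_filter_add_sum_filter_not Finset.univ (· < j) (fun i => u i * e i)]
  have h1 : ∑ i ∈ Finset.univ.filter (· < j), u i * e₀ i =
      ∑ i ∈ Finset.univ.filter (· < j), u i * e i :=
    Finset.sum_congr rfl fun i hi => by rw [heq i (Finset.mem_filter.mp hi).2]
  rw [h1]
  apply Nat.add_lt_add_left
  set T := Finset.univ.filter (fun i => ¬ i < j) with hT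
  have hjT : j ∈ T := by simp [hT]
  have hsplit : ∑ i ∈ T, u i * e₀ i = u j * e₀ j + ∑ i ∈ T.erase j, u i * e₀ i :=
    (Finset.add_sum_erase T _ hjT).symm
  have hbound : ∑ i ∈ T.erase j, u i * e₀ i < u j := by
    rcases Nat.lt_or_ge j.val (n - 1) with hjn | hjn
    swap
    · have hTe : T.erase j = ∅ := by
        apply Finset.eq_empty_of_forall_notMem
        intro i hi
        have hij : j < i := by
          simp only [hT, Finset.mem_erase, Finset.mem_filter] at hi
          exact lt_of_le_of_ne (not_lt.mp hi.2.2) (Ne.symm hi.1)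
        have h3 : j.val < i.val := hij
        have h4 : i.val < n := i.2
        omega
      rw [hTe, Finset.sum_empty]
      exact pow_pos (by omega) _
    have hD2 : ∀ i ∈ T.erase j, u i * e₀ i ≤ (D + 1) ^ (n - 2 - j.val) * e₀ i := by
      intro i hi
      have hij : j < i := by
        simp only [hT, Finset.mem_erase, Finset.mem_filter] at hi
        exact lt_of_le_of_ne (not_lt.mp hi.2.2) (Ne.symm hi.1)
      apply Nat.mul_le_mul_right
      apply Nat.pow_le_pow_right (by omega)
      have h3 : j.val < i.val := hij
      have h4 : i.val < n := i.2
      omega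
    calc ∑ i ∈ T.erase j, u i * e₀ i
        ≤ ∑ i ∈ T.erase j, (D + 1) ^ (n - 2 - j.val) * e₀ i := Finset.sum_le_sum hD2
      _ = (D + 1) ^ (n - 2 - j.val) * ∑ i ∈ T.erase j, e₀ i := by rw [Finset.mul_sum]
      _ ≤ (D + 1) ^ (n - 2 - j.val) * D := by
          apply Nat.mul_le_mul_left
          rw [hD, degree_eq_sum_univ]
          exact Finset.sum_le_sum_of_subset (Finset.subset_univ _)
      _ < (D + 1) ^ (n - 2 - j.val) * (D + 1) := by
          exact mul_lt_mul_of_pos_left (by omega) (pow_pos (by omega) _)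
      _ ≤ u j := by
          rw [← pow_succ]
          apply Nat.pow_le_pow_right (by omega)
          have h4 : j.val < n := j.2
          omega
  calc ∑ i ∈ T, u i * e₀ i = u j * e₀ j + ∑ i ∈ T.erase j, u i * e₀ i := hsplit
    _ < u j * e₀ j + u j := Nat.add_lt_add_left hbound _
    _ = u j * (e₀ j + 1) := by ring
    _ ≤ u j * e j := Nat.mul_le_mul_left _ (by omega)
    _ ≤ ∑ i ∈ T, u i * e i := Finset.single_le_sum (f := fun i => u i * e i) (fun i _ => Nat.zero_le _) hjT

end Apply

end Stmt9

/-- Weierstrass-type preparation of the variables. Let `k` be a field and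
`f ∈ k[[T₁,…,Tₙ]]` a nonzero formal power series, `n ≥ 1`. Then there are positive
integers `u₁,…,u_{n-1}` and a `k`-algebra automorphism `s` of `k[[T₁,…,Tₙ]]` with
`s(Tᵢ) = Tᵢ + Tₙ^{uᵢ}` for `i < n` and `s(Tₙ) = Tₙ`, such that `g = s(f)` satisfies
`g(0,…,0,Tₙ) ≠ 0`, i.e. some coefficient of `g` at a pure power of `Tₙ` is nonzero. -/
theorem exists_automorphism_powerSeries_last_var_ne_zero
    (k : Type*) [Field k] (n : ℕ) (hn : 1 ≤ n)
    (f : MvPowerSeries (Fin n) k) (hf : f ≠ 0) :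
    ∃ (u : Fin n → ℕ), (∀ i, 0 < u i) ∧
      ∃ s : MvPowerSeries (Fin n) k ≃ₐ[k] MvPowerSeries (Fin n) k,
        (∀ i : Fin n, i ≠ ⟨n - 1, by omega⟩ →
          s (MvPowerSeries.X i) =
            MvPowerSeries.X i + MvPowerSeries.X (⟨n - 1, by omega⟩ : Fin n) ^ u i) ∧
        s (MvPowerSeries.X (⟨n - 1, by omega⟩ : Fin n)) =
          MvPowerSeries.X (⟨n - 1, by omega⟩ : Fin n) ∧
        ∃ m : ℕ, MvPowerSeries.coeff
          (Finsupp.single (⟨n - 1, by omega⟩ : Fin n) m) (s f) ≠ 0 := by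
  classical
  open Stmt9 in
  set ℓ : Fin n := ⟨n - 1, by omega⟩ with hℓ
  -- find the lex-minimal exponent of f
  have hwf : WellFoundedLT (Lex (Fin n →₀ ℕ)) := Finsupp.Lex.wellFoundedLT_of_finite
  set S : Set (Lex (Fin n →₀ ℕ)) := {e | MvPowerSeries.coeff (ofLex e) f ≠ 0} with hS
  have hSne : S.Nonempty := by
    by_contra h
    rw [Set.not_nonempty_iff_eq_empty] at h
    apply hf
    ext d
    by_contra hd
    have : toLex d ∈ S := by simpa [hS] using hd
    rw [h] at this
    exact this
  set e₀l : Lex (Fin n →₀ ℕ) := hwf.wf.min S hSne with he₀l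
  set e₀ : Fin n →₀ ℕ := ofLex e₀l with he₀
  have he₀S : MvPowerSeries.coeff e₀ f ≠ 0 := hwf.wf.min_mem S hSne
  have hmin : ∀ e : Fin n →₀ ℕ, MvPowerSeries.coeff e f ≠ 0 → e ≠ e₀ →
      toLex e₀ < toLex e := by
    intro e he hne
    have h1 : ¬ (toLex e < e₀l) := hwf.wf.not_lt_min S (by simpa [hS] using he)
    have h2 : e₀l ≠ toLex e := fun hcon => hne (by rw [he₀, hcon]; rfl)
    have : toLex e₀ = e₀l := rfl
    rw [this]
    exact lt_of_le_of_ne (not_lt.mp h1) h2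
  set D := e₀.degree with hD
  set u : Fin n → ℕ := fun i => (D + 1) ^ (n - 1 - i.val) with hu
  have hupos : ∀ i, 0 < u i := fun i => pow_pos (by omega) _
  have huℓ : u ℓ = 1 := by
    simp only [hu, hℓ]
    rw [show n - 1 - (n - 1) = 0 by omega, pow_zero]
  refine ⟨u, hupos, ?_⟩
  refine ⟨Stmt9.subEquiv (Afam ℓ u) (hAfam ℓ u hupos) (Bfam ℓ u) (hBfam ℓ u hupos)
    (sub_B_A ℓ u hupos) (sub_A_B ℓ u hupos), ?_, ?_, ?_⟩
  · intro i hi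
    rw [subEquiv_apply, sub_X _ (hAfam ℓ u hupos), Afam, if_neg hi]
  · rw [subEquiv_apply, sub_X _ (hAfam ℓ u hupos), Afam, if_pos rfl]
  · refine ⟨∑ i, u i * e₀ i, ?_⟩
    rw [subEquiv_apply, coeff_sub _ (hAfam ℓ u hupos) f _ (le_refl _)]
    rw [Finset.sum_eq_single_of_mem e₀]
    · rw [claimA ℓ u hupos huℓ, if_pos rfl, mul_one]
      exact he₀S
    · rw [mem_Iic_bnd, Stmt9.degree_single]
      intro i
      calc e₀ i ≤ u i * e₀ i := Nat.le_mul_of_pos_left _ (hupos i)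
        _ ≤ ∑ j, u j * e₀ j :=
          Finset.single_le_sum (f := fun j => u j * e₀ j)
            (fun j _ => Nat.zero_le _) (Finset.mem_univ i)
    · intro e _ hne
      by_cases hce : MvPowerSeries.coeff e f = 0
      · rw [hce, zero_mul]
      · have hlex := hmin e hce hne
        have hkey := key_ineq e₀ e hlex
        have hkey' : (∑ i, u i * e₀ i) < ∑ i, u i * e i := by
          simpa only [hu, ← hD] using hkey
        rw [claimA ℓ u hupos huℓ, if_neg (by omega), mul_zero]
end
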